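/- If A and B are independent discrete random variables and M is any discrete random variable jointly distributed with them, then E_{m ← M}[ SD( A|_{M=m}×B|_{M=m} vs (A,B)|_{M=m} ) ] ≤ 2·E_{b ← B}[ SD( (A,M)|_{B=b} , A|_{B=b} × M|_{B=b} ) ]. -/

import Mathlib

open scoped BigOperators Classical

noncomputable section

variable {Ω : Type*} [Fintype Ω]

/-- Probability of an event under a mass function `μ`. -/
def prEv (μ : Ω → ℝ) (E : Ω → Prop) : ℝ := ∑ ω, if E ω then μ ω else 0

/-- Distribution (pmf) of a random variable. -/
def rvDist (μ : Ω → ℝ) {α : Type*} (X : Ω → α) : α → ℝ :=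
  fun a => prEv μ (fun ω => X ω = a)

/-- Conditional distribution of `X` given the event `B = b`. -/
def condDist (μ : Ω → ℝ) {α β : Type*} (X : Ω → α) (B : Ω → β) (b : β) : α → ℝ :=
  fun a => prEv μ (fun ω => X ω = a ∧ B ω = b) / prEv μ (fun ω => B ω = b)

/-- Product of two distributions. -/
def prodDist {α β : Type*} (P : α → ℝ) (Q : β → ℝ) : α × β → ℝ := fun p => P p.1 * Q p.2

/-- Statistical (total variation) distance between two distributions on a finite set. -/
def SD {α : Type*} [Fintype α] (P Q : α → ℝ) : ℝ := (1/2) * ∑ a, |P a - Q a|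

/-- Shannon entropy (base 2) of a distribution, with the convention `0 · log(1/0) = 0`. -/
def H2 {α : Type*} [Fintype α] (P : α → ℝ) : ℝ :=
  ∑ a, if P a = 0 then 0 else P a * Real.logb 2 (1 / P a)

/-- Shannon entropy of a random variable. -/
def entRV (μ : Ω → ℝ) {α : Type*} [Fintype α] (X : Ω → α) : ℝ := H2 (rvDist μ X)

/-- Conditional mutual information `I(A;B|C)` (in bits). -/
def condMI (μ : Ω → ℝ) {α β γ : Type*} [Fintype α] [Fintype β] [Fintype γ]
    (A : Ω → α) (B : Ω → β) (C : Ω → γ) : ℝ :=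
  entRV μ (fun ω => (A ω, C ω)) + entRV μ (fun ω => (B ω, C ω))
    - entRV μ (fun ω => (A ω, B ω, C ω)) - entRV μ C

/-- The conditional probability measure given `Z = z`. -/
def condMeas (μ : Ω → ℝ) {ζ : Type*} (Z : Ω → ζ) (z : ζ) : Ω → ℝ :=
  fun ω => if Z ω = z then μ ω / prEv μ (fun ω' => Z ω' = z) else 0

/-- `μ` is a probability mass function. -/
def IsPMF (μ : Ω → ℝ) : Prop := (∀ ω, 0 ≤ μ ω) ∧ ∑ ω, μ ω = 1

end

/- ## Auxiliary lemmas -/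

noncomputable section Aux

variable {Ω : Type*} [Fintype Ω]

theorem prEv_congr' (μ : Ω → ℝ) {E F : Ω → Prop} (h : ∀ ω, E ω ↔ F ω) :
    prEv μ E = prEv μ F := by
  unfold prEv; exact Finset.sum_congr rfl fun ω _ => by simp [h ω]

theorem prEv_nonneg' {μ : Ω → ℝ} (hμ : ∀ ω, 0 ≤ μ ω) (E : Ω → Prop) : 0 ≤ prEv μ E :=
  Finset.sum_nonneg fun ω _ => by split <;> simp [hμ ω]

theorem prEv_mono' {μ : Ω → ℝ} (hμ : ∀ ω, 0 ≤ μ ω) {E F : Ω → Prop}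
    (h : ∀ ω, E ω → F ω) : prEv μ E ≤ prEv μ F := by
  refine Finset.sum_le_sum fun ω _ => ?_
  by_cases hE : E ω
  · simp [hE, h ω hE]
  · simp only [hE, if_false]; split <;> simp [hμ ω]

theorem prEv_sum_fiber' (μ : Ω → ℝ) {β : Type*} [Fintype β] (B : Ω → β) (E : Ω → Prop) :
    ∑ b, prEv μ (fun ω => E ω ∧ B ω = b) = prEv μ E := by
  unfold prEv
  rw [Finset.sum_comm]
  refine Finset.sum_congr rfl fun ω _ => ?_
  by_cases hE : E ω <;> simp [hE]

theorem mul_abs'' (c : ℝ) (hc : 0 ≤ c) (x : ℝ) : c * |x| = |c * x| := by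
  rw [abs_mul, abs_of_nonneg hc]

/-- Abstract per-`b` computation for the right-hand side. -/
theorem abstract_rhs {α γ : Type*} [Fintype α] [Fintype γ]
    (pB : ℝ) (pA : α → ℝ) (pMB : γ → ℝ) (p3 : α → γ → ℝ) (hpB : 0 < pB) :
    2 * pB * (1/2 * ∑ x : α × γ, |p3 x.1 x.2 / pB - pA x.1 * pB / pB * (pMB x.2 / pB)|)
      = ∑ a : α, ∑ m : γ, |p3 a m - pA a * pMB m| := by
  calc 2 * pB * (1/2 * ∑ x : α × γ, |p3 x.1 x.2 / pB - pA x.1 * pB / pB * (pMB x.2 / pB)|)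
      = ∑ x : α × γ, pB * |p3 x.1 x.2 / pB - pA x.1 * pB / pB * (pMB x.2 / pB)| := by
        simp only [Finset.mul_sum]
        exact Finset.sum_congr rfl fun x _ => by ring
    _ = ∑ x : α × γ, |p3 x.1 x.2 - pA x.1 * pMB x.2| := by
        refine Finset.sum_congr rfl fun x _ => ?_
        rw [mul_abs'' pB hpB.le]
        congr 1
        field_simp
    _ = ∑ a : α, ∑ m : γ, |p3 a m - pA a * pMB m| := Fintype.sum_prod_type _

/-- Abstract per-`m` inequality for the left-hand side. -/
theorem abstract_lhs {α β : Type*} [Fintype α] [Fintype β]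
    (pM : ℝ) (pA : α → ℝ) (pAM : α → ℝ) (pBM : β → ℝ) (p3 : α → β → ℝ)
    (hpM : 0 < pM)
    (hBMnn : ∀ b, 0 ≤ pBM b)
    (hsumBM : ∑ b, pBM b = pM)
    (hsum3 : ∀ a, ∑ b, p3 a b = pAM a) :
    pM * (1/2 * ∑ x : α × β, |pAM x.1 / pM * (pBM x.2 / pM) - p3 x.1 x.2 / pM|)
      ≤ ∑ a : α, ∑ b : β, |p3 a b - pA a * pBM b| := by
  have hterm : ∀ x : α × β,
      pM * |pAM x.1 / pM * (pBM x.2 / pM) - p3 x.1 x.2 / pM|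
        = |pAM x.1 * pBM x.2 / pM - p3 x.1 x.2| := by
    intro x
    rw [mul_abs'' pM hpM.le]
    congr 1
    field_simp
  have htri : ∀ x : α × β,
      |pAM x.1 * pBM x.2 / pM - p3 x.1 x.2|
        ≤ pBM x.2 / pM * |pAM x.1 - pA x.1 * pM| + |pA x.1 * pBM x.2 - p3 x.1 x.2| := by
    intro x
    have hdec : pAM x.1 * pBM x.2 / pM - p3 x.1 x.2
        = pBM x.2 / pM * (pAM x.1 - pA x.1 * pM) + (pA x.1 * pBM x.2 - p3 x.1 x.2) := by
      field_simp
      ring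
    rw [hdec]
    refine (abs_add_le _ _).trans ?_
    rw [abs_mul, abs_of_nonneg (div_nonneg (hBMnn x.2) hpM.le)]
  have hsum1 : ∑ x : α × β, pBM x.2 / pM * |pAM x.1 - pA x.1 * pM|
      = ∑ a : α, |pAM a - pA a * pM| := by
    rw [Fintype.sum_prod_type]
    refine Finset.sum_congr rfl fun a _ => ?_
    dsimp only
    rw [← Finset.sum_mul, ← Finset.sum_div, hsumBM, div_self hpM.ne', one_mul]
  have hsum2 : ∀ a : α, |pAM a - pA a * pM| ≤ ∑ b : β, |p3 a b - pA a * pBM b| := by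
    intro a
    have h : pAM a - pA a * pM = ∑ b : β, (p3 a b - pA a * pBM b) := by
      rw [Finset.sum_sub_distrib, hsum3 a, ← Finset.mul_sum, hsumBM]
    rw [h]
    exact Finset.abs_sum_le_sum_abs _ _
  have hsum4 : ∑ x : α × β, |pA x.1 * pBM x.2 - p3 x.1 x.2|
      = ∑ a : α, ∑ b : β, |p3 a b - pA a * pBM b| := by
    rw [Fintype.sum_prod_type]
    exact Finset.sum_congr rfl fun a _ =>
      Finset.sum_congr rfl fun b _ => abs_sub_comm _ _
  calc pM * (1/2 * ∑ x : α × β, |pAM x.1 / pM * (pBM x.2 / pM) - p3 x.1 x.2 / pM|)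
      = 1/2 * ∑ x : α × β, pM * |pAM x.1 / pM * (pBM x.2 / pM) - p3 x.1 x.2 / pM| := by
        simp only [Finset.mul_sum]
        exact Finset.sum_congr rfl fun x _ => by ring
    _ = 1/2 * ∑ x : α × β, |pAM x.1 * pBM x.2 / pM - p3 x.1 x.2| := by
        simp only [hterm]
    _ ≤ 1/2 * ∑ x : α × β,
          (pBM x.2 / pM * |pAM x.1 - pA x.1 * pM| + |pA x.1 * pBM x.2 - p3 x.1 x.2|) := by
        refine mul_le_mul_of_nonneg_left (Finset.sum_le_sum fun x _ => htri x) (by norm_num)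
    _ = 1/2 * ((∑ x : α × β, pBM x.2 / pM * |pAM x.1 - pA x.1 * pM|)
          + ∑ x : α × β, |pA x.1 * pBM x.2 - p3 x.1 x.2|) := by
        rw [Finset.sum_add_distrib]
    _ = 1/2 * ((∑ a : α, |pAM a - pA a * pM|)
          + ∑ a : α, ∑ b : β, |p3 a b - pA a * pBM b|) := by rw [hsum1, hsum4]
    _ ≤ 1/2 * ((∑ a : α, ∑ b : β, |p3 a b - pA a * pBM b|)
          + ∑ a : α, ∑ b : β, |p3 a b - pA a * pBM b|) := by
        refine mul_le_mul_of_nonneg_left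
          (add_le_add_left (Finset.sum_le_sum fun a _ => hsum2 a) _) (by norm_num)
    _ = ∑ a : α, ∑ b : β, |p3 a b - pA a * pBM b| := by ring

/-- Glue lemma: per-`m` bound on the left-hand side. -/
theorem lhs_bound {α β γ : Type*} [Fintype α] [Fintype β] [Fintype γ]
    (μ : Ω → ℝ) (hμ0 : ∀ ω, 0 ≤ μ ω)
    (A : Ω → α) (B : Ω → β) (M : Ω → γ) (m : γ) :
    rvDist μ M m *
        SD (prodDist (condDist μ A M m) (condDist μ B M m))
           (condDist μ (fun ω => (A ω, B ω)) M m)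
      ≤ ∑ a : α, ∑ b : β,
          |prEv μ (fun ω => A ω = a ∧ B ω = b ∧ M ω = m)
            - rvDist μ A a * prEv μ (fun ω => B ω = b ∧ M ω = m)| := by
  simp only [rvDist, SD, condDist, prodDist]
  have hQ : ∀ x : α × β,
      prEv μ (fun ω => (A ω, B ω) = x ∧ M ω = m)
        = prEv μ (fun ω => A ω = x.1 ∧ B ω = x.2 ∧ M ω = m) := fun x =>
    prEv_congr' μ fun ω => by
      constructor
      · rintro ⟨h1, h2⟩; exact ⟨congrArg Prod.fst h1, congrArg Prod.snd h1, h2⟩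
      · rintro ⟨h1, h2, h3⟩; exact ⟨Prod.ext h1 h2, h3⟩
  simp only [hQ]
  by_cases hm : prEv μ (fun ω => M ω = m) = 0
  · rw [hm, zero_mul]
    exact Finset.sum_nonneg fun a _ => Finset.sum_nonneg fun b _ => abs_nonneg _
  · have hmpos : (0:ℝ) < prEv μ (fun ω => M ω = m) :=
      lt_of_le_of_ne (prEv_nonneg' hμ0 _) (Ne.symm hm)
    have hsumBM : ∑ b : β, prEv μ (fun ω => B ω = b ∧ M ω = m)
        = prEv μ (fun ω => M ω = m) := by
      calc ∑ b : β, prEv μ (fun ω => B ω = b ∧ M ω = m)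
          = ∑ b : β, prEv μ (fun ω => M ω = m ∧ B ω = b) :=
            Finset.sum_congr rfl fun b _ => prEv_congr' μ fun ω => and_comm
        _ = prEv μ (fun ω => M ω = m) := prEv_sum_fiber' μ B _
    have hsum3 : ∀ a : α, ∑ b : β, prEv μ (fun ω => A ω = a ∧ B ω = b ∧ M ω = m)
        = prEv μ (fun ω => A ω = a ∧ M ω = m) := by
      intro a
      calc ∑ b : β, prEv μ (fun ω => A ω = a ∧ B ω = b ∧ M ω = m)
          = ∑ b : β, prEv μ (fun ω => (A ω = a ∧ M ω = m) ∧ B ω = b) :=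
            Finset.sum_congr rfl fun b _ => prEv_congr' μ fun ω => by tauto
        _ = prEv μ (fun ω => A ω = a ∧ M ω = m) := prEv_sum_fiber' μ B _
    exact abstract_lhs (prEv μ (fun ω => M ω = m))
      (fun a => prEv μ (fun ω => A ω = a))
      (fun a => prEv μ (fun ω => A ω = a ∧ M ω = m))
      (fun b => prEv μ (fun ω => B ω = b ∧ M ω = m))
      (fun a b => prEv μ (fun ω => A ω = a ∧ B ω = b ∧ M ω = m))
      hmpos (fun b => prEv_nonneg' hμ0 _) hsumBM hsum3

/-- Glue lemma: per-`b` identity on the right-hand side, using independence. -/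
theorem rhs_eq {α β γ : Type*} [Fintype α] [Fintype β] [Fintype γ]
    (μ : Ω → ℝ) (hμ0 : ∀ ω, 0 ≤ μ ω)
    (A : Ω → α) (B : Ω → β) (M : Ω → γ)
    (hind : rvDist μ (fun ω => (A ω, B ω)) = prodDist (rvDist μ A) (rvDist μ B)) (b : β) :
    2 * rvDist μ B b *
        SD (condDist μ (fun ω => (A ω, M ω)) B b)
           (prodDist (condDist μ A B b) (condDist μ M B b))
      = ∑ a : α, ∑ m : γ,
          |prEv μ (fun ω => A ω = a ∧ B ω = b ∧ M ω = m)
            - rvDist μ A a * prEv μ (fun ω => B ω = b ∧ M ω = m)| := by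
  have hAB : ∀ a : α, prEv μ (fun ω => A ω = a ∧ B ω = b)
      = prEv μ (fun ω => A ω = a) * prEv μ (fun ω => B ω = b) := by
    intro a
    have h2 := congrFun hind (a, b)
    simp only [rvDist, prodDist] at h2
    calc prEv μ (fun ω => A ω = a ∧ B ω = b)
        = prEv μ (fun ω => (A ω, B ω) = (a, b)) :=
          prEv_congr' μ fun ω => by
            constructor
            · rintro ⟨h1, h3⟩; rw [h1, h3]
            · intro h1; exact ⟨congrArg Prod.fst h1, congrArg Prod.snd h1⟩
      _ = prEv μ (fun ω => A ω = a) * prEv μ (fun ω => B ω = b) := h2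
  simp only [rvDist, SD, condDist, prodDist]
  have hE1 : ∀ x : α × γ,
      prEv μ (fun ω => (A ω, M ω) = x ∧ B ω = b)
        = prEv μ (fun ω => A ω = x.1 ∧ B ω = b ∧ M ω = x.2) := fun x =>
    prEv_congr' μ fun ω => by
      constructor
      · rintro ⟨h1, h2⟩; exact ⟨congrArg Prod.fst h1, h2, congrArg Prod.snd h1⟩
      · rintro ⟨h1, h2, h3⟩; exact ⟨Prod.ext h1 h3, h2⟩
  have hE3 : ∀ mm : γ, prEv μ (fun ω => M ω = mm ∧ B ω = b)
      = prEv μ (fun ω => B ω = b ∧ M ω = mm) := fun mm =>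
    prEv_congr' μ fun ω => and_comm
  simp only [hE1, hE3, hAB]
  by_cases hb : prEv μ (fun ω => B ω = b) = 0
  · rw [hb]
    simp only [mul_zero, zero_mul]
    symm
    refine Finset.sum_eq_zero fun a _ => Finset.sum_eq_zero fun m _ => ?_
    have h1 : prEv μ (fun ω => A ω = a ∧ B ω = b ∧ M ω = m) = 0 :=
      le_antisymm (hb ▸ prEv_mono' hμ0 fun ω h => h.2.1) (prEv_nonneg' hμ0 _)
    have h2 : prEv μ (fun ω => B ω = b ∧ M ω = m) = 0 :=
      le_antisymm (hb ▸ prEv_mono' hμ0 fun ω h => h.1) (prEv_nonneg' hμ0 _)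
    rw [h1, h2, mul_zero, sub_zero, abs_zero]
  · have hbpos : (0:ℝ) < prEv μ (fun ω => B ω = b) :=
      lt_of_le_of_ne (prEv_nonneg' hμ0 _) (Ne.symm hb)
    exact abstract_rhs (prEv μ (fun ω => B ω = b))
      (fun a => prEv μ (fun ω => A ω = a))
      (fun mm => prEv μ (fun ω => B ω = b ∧ M ω = mm))
      (fun a mm => prEv μ (fun ω => A ω = a ∧ B ω = b ∧ M ω = mm))
      hbpos

end Aux

/-- If `A` and `B` are independent, then
`E_{m←M}[SD(A|_m × B|_m, (A,B)|_m)] ≤ 2·E_{b←B}[SD((A,M)|_b, A|_b × M|_b)]`. -/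
theorem expected_condSD_le_two_expected_of_indep {Ω α β γ : Type*}
    [Fintype Ω] [Fintype α] [Fintype β] [Fintype γ]
    (μ : Ω → ℝ) (hμ : IsPMF μ)
    (A : Ω → α) (B : Ω → β) (M : Ω → γ)
    (hind : rvDist μ (fun ω => (A ω, B ω)) = prodDist (rvDist μ A) (rvDist μ B)) :
    ∑ m : γ, rvDist μ M m *
        SD (prodDist (condDist μ A M m) (condDist μ B M m))
           (condDist μ (fun ω => (A ω, B ω)) M m)
      ≤ 2 * (∑ b : β, rvDist μ B b *
              SD (condDist μ (fun ω => (A ω, M ω)) B b)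
                 (prodDist (condDist μ A B b) (condDist μ M B b))) := by
  obtain ⟨hμ0, -⟩ := hμ
  calc ∑ m : γ, rvDist μ M m *
        SD (prodDist (condDist μ A M m) (condDist μ B M m))
           (condDist μ (fun ω => (A ω, B ω)) M m)
      ≤ ∑ m : γ, ∑ a : α, ∑ b : β,
          |prEv μ (fun ω => A ω = a ∧ B ω = b ∧ M ω = m)
            - rvDist μ A a * prEv μ (fun ω => B ω = b ∧ M ω = m)| :=
        Finset.sum_le_sum fun m _ => lhs_bound μ hμ0 A B M m
    _ = ∑ a : α, ∑ m : γ, ∑ b : β,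
          |prEv μ (fun ω => A ω = a ∧ B ω = b ∧ M ω = m)
            - rvDist μ A a * prEv μ (fun ω => B ω = b ∧ M ω = m)| :=
        Finset.sum_comm
    _ = ∑ a : α, ∑ b : β, ∑ m : γ,
          |prEv μ (fun ω => A ω = a ∧ B ω = b ∧ M ω = m)
            - rvDist μ A a * prEv μ (fun ω => B ω = b ∧ M ω = m)| :=
        Finset.sum_congr rfl fun a _ => Finset.sum_comm
    _ = ∑ b : β, ∑ a : α, ∑ m : γ,
          |prEv μ (fun ω => A ω = a ∧ B ω = b ∧ M ω = m)
            - rvDist μ A a * prEv μ (fun ω => B ω = b ∧ M ω = m)| :=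
        Finset.sum_comm
    _ = ∑ b : β, 2 * rvDist μ B b *
          SD (condDist μ (fun ω => (A ω, M ω)) B b)
             (prodDist (condDist μ A B b) (condDist μ M B b)) :=
        Finset.sum_congr rfl fun b _ => (rhs_eq μ hμ0 A B M hind b).symm
    _ = 2 * (∑ b : β, rvDist μ B b *
              SD (condDist μ (fun ω => (A ω, M ω)) B b)
                 (prodDist (condDist μ A B b) (condDist μ M B b))) := by
        rw [Finset.mul_sum]
        exact Finset.sum_congr rfl fun b _ => by ring
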